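/- Let α be a linear order, k a natural number, and let C₁, C₂ : Fin k → α be monotone sequences. For any e ∈ α, with μ_e as the count of indices mapping to e, we have max(μ_e(C₁ ⊔ C₂), μ_e(C₁ ⊓ C₂)) ≤ max(μ_e(C₁), μ_e(C₂)). -/
import Mathlib

open Finset

lemma down_comp {k : ℕ} (S T : Finset (Fin k))
    (hS : ∀ ⦃i j : Fin k⦄, i ≤ j → j ∈ S → i ∈ S)
    (hT : ∀ ⦃i j : Fin k⦄, i ≤ j → j ∈ T → i ∈ T) :
    S ⊆ T ∨ T ⊆ S := by
  by_cases h : S ⊆ T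
  · exact Or.inl h
  · right
    obtain ⟨x, hxS, hxT⟩ := Finset.not_subset.mp h
    intro y hy
    rcases le_total y x with hle | hle
    · exact hS hle hxS
    · exact absurd (hT hle hy) hxT

lemma card_inter_comp {k : ℕ} (S T : Finset (Fin k)) (h : S ⊆ T ∨ T ⊆ S) :
    (S ∩ T).card = min S.card T.card := by
  rcases h with h | h
  · rw [Finset.inter_eq_left.mpr h, min_eq_left (Finset.card_le_card h)]
  · rw [Finset.inter_eq_right.mpr h, min_eq_right (Finset.card_le_card h)]

lemma card_union_comp {k : ℕ} (S T : Finset (Fin k)) (h : S ⊆ T ∨ T ⊆ S) :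
    (S ∪ T).card = max S.card T.card := by
  rcases h with h | h
  · rw [Finset.union_eq_right.mpr h, max_eq_right (Finset.card_le_card h)]
  · rw [Finset.union_eq_left.mpr h, max_eq_left (Finset.card_le_card h)]

lemma mu_split {α : Type*} [LinearOrder α] {k : ℕ} (C : Fin k → α) (e : α) :
    (Finset.univ.filter fun i => C i ≤ e).card
      = (Finset.univ.filter fun i => C i = e).card
        + (Finset.univ.filter fun i => C i < e).card := by
  rw [← Finset.card_union_of_disjoint, ← Finset.filter_or]
  · apply congrArg
    apply Finset.filter_congr
    intro i _
    exact le_iff_eq_or_lt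
  · rw [Finset.disjoint_filter]
    intro i _ h
    simp [h]

theorem multiplicity_max_le {α : Type*} [LinearOrder α] {k : ℕ}
    (C₁ C₂ : Fin k → α) (h₁ : Monotone C₁) (h₂ : Monotone C₂) (e : α) :
    max (Finset.univ.filter fun i => (C₁ ⊔ C₂) i = e).card
        (Finset.univ.filter fun i => (C₁ ⊓ C₂) i = e).card ≤
    max (Finset.univ.filter fun i => C₁ i = e).card
        (Finset.univ.filter fun i => C₂ i = e).card := by
  classical
  have comp_le : (Finset.univ.filter fun i => C₁ i ≤ e) ⊆ (Finset.univ.filter fun i => C₂ i ≤ e)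
      ∨ (Finset.univ.filter fun i => C₂ i ≤ e) ⊆ (Finset.univ.filter fun i => C₁ i ≤ e) := by
    apply down_comp
    · intro i j hij hj
      simp only [mem_filter, mem_univ, true_and] at *
      exact (h₁ hij).trans hj
    · intro i j hij hj
      simp only [mem_filter, mem_univ, true_and] at *
      exact (h₂ hij).trans hj
  have comp_lt : (Finset.univ.filter fun i => C₁ i < e) ⊆ (Finset.univ.filter fun i => C₂ i < e)
      ∨ (Finset.univ.filter fun i => C₂ i < e) ⊆ (Finset.univ.filter fun i => C₁ i < e) := by
    apply down_comp
    · intro i j hij hj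
      simp only [mem_filter, mem_univ, true_and] at *
      exact (h₁ hij).trans_lt hj
    · intro i j hij hj
      simp only [mem_filter, mem_univ, true_and] at *
      exact (h₂ hij).trans_lt hj
  have e1 := mu_split C₁ e
  have e2 := mu_split C₂ e
  have esup := mu_split (C₁ ⊔ C₂) e
  have einf := mu_split (C₁ ⊓ C₂) e
  have hsup_le : (Finset.univ.filter fun i => (C₁ ⊔ C₂) i ≤ e)
      = (Finset.univ.filter fun i => C₁ i ≤ e) ∩ (Finset.univ.filter fun i => C₂ i ≤ e) := by
    ext i; simp [sup_le_iff]
  have hsup_lt : (Finset.univ.filter fun i => (C₁ ⊔ C₂) i < e)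
      = (Finset.univ.filter fun i => C₁ i < e) ∩ (Finset.univ.filter fun i => C₂ i < e) := by
    ext i; simp [sup_lt_iff]
  have hinf_le : (Finset.univ.filter fun i => (C₁ ⊓ C₂) i ≤ e)
      = (Finset.univ.filter fun i => C₁ i ≤ e) ∪ (Finset.univ.filter fun i => C₂ i ≤ e) := by
    ext i; simp [inf_le_iff]
  have hinf_lt : (Finset.univ.filter fun i => (C₁ ⊓ C₂) i < e)
      = (Finset.univ.filter fun i => C₁ i < e) ∪ (Finset.univ.filter fun i => C₂ i < e) := by
    ext i; simp [inf_lt_iff]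
  rw [hsup_le, hsup_lt, card_inter_comp _ _ comp_le, card_inter_comp _ _ comp_lt] at esup
  rw [hinf_le, hinf_lt, card_union_comp _ _ comp_le, card_union_comp _ _ comp_lt] at einf
  omega
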